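/- arXiv:math/0608160 — 4 statements merged into one kernel-verified Lean document; each statement's English description precedes it below -/
import Mathlib

section
/- For an odd integer n ≥ 3, the Abel sum lim_{t→1⁻} Σ_j (-1)^j b_j t^j equals (n+1)/(2n-2), where b_j are the coefficients of the series t^(n-1)*(1/(1-t^2) + t^(n-1)/(1-t^(n-1))). -/
open PowerSeries Filter

lemma geom_inv_aux (m : ℕ) (hm : 0 < m) :
    (1 - (X : ℚ⟦X⟧) ^ m)⁻¹ = PowerSeries.mk fun k => if m ∣ k then 1 else 0 := by
  have hc : constantCoeff (1 - (X : ℚ⟦X⟧) ^ m) ≠ 0 := by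
    simp [hm.ne', zero_pow hm.ne']
  rw [eq_comm, PowerSeries.eq_inv_iff_mul_eq_one hc]
  ext k
  rw [mul_sub, mul_one, map_sub, PowerSeries.coeff_mul_X_pow']
  rcases Nat.eq_zero_or_pos k with rfl | hk
  · simp [Nat.not_le.mpr hm]
  · rw [PowerSeries.coeff_one, if_neg hk.ne']
    simp only [coeff_mk]
    by_cases h : m ≤ k
    · rw [if_pos h]
      have : m ∣ k ↔ m ∣ k - m := by
        constructor
        · intro hd; exact Nat.dvd_sub hd dvd_rfl
        · intro hd; have : k = (k - m) + m := by omega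
          rw [this]; exact dvd_add hd dvd_rfl
      simp only [this, sub_self]
    · rw [if_neg h]
      have : ¬ m ∣ k := by
        intro hd; exact h (Nat.le_of_dvd hk hd)
      simp [this]

set_option maxHeartbeats 1600000 in
/-- The Abel sum (with regularizing factor `(1-t)`, as the partial alternating
sums grow linearly) of `∑ (-1)^j b_j` equals `(n+1)/(2n-2)` for odd `n ≥ 3`,
where `b_j` are the coefficients of
`t^(n-1) * (1/(1-t^2) + t^(n-1)/(1-t^(n-1)))`. -/
theorem stmt_4 (n : ℕ) (hn : 3 ≤ n) (hno : Odd n) (b : ℕ → ℚ)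
    (hb : ∀ k : ℕ, b k = PowerSeries.coeff k
      ((X : ℚ⟦X⟧) ^ (n - 1) *
        ((1 - (X : ℚ⟦X⟧) ^ 2)⁻¹ +
          (X : ℚ⟦X⟧) ^ (n - 1) * (1 - (X : ℚ⟦X⟧) ^ (n - 1))⁻¹))) :
    Tendsto (fun t : ℝ => (1 - t) * ∑' j : ℕ, (-1) ^ j * (b j : ℝ) * t ^ j)
      (nhdsWithin 1 (Set.Iio 1)) (nhds (((n : ℝ) + 1) / (2 * n - 2))) := by
  set m := n - 1 with hmdef
  clear_value m
  have hm2 : 2 ≤ m := by omega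
  have hm0 : 0 < m := by omega
  have hme : 2 ∣ m := by
    obtain ⟨k, hk⟩ := hno; omega
  -- explicit coefficient formula
  have hbval : ∀ k, b k = (if m ≤ k ∧ 2 ∣ k then 1 else 0)
      + (if m + m ≤ k ∧ m ∣ k then 1 else 0) := by
    intro k
    rw [hb k, mul_add, map_add, ← mul_assoc, ← pow_add,
      geom_inv_aux 2 (by norm_num), geom_inv_aux m hm0,
      PowerSeries.coeff_X_pow_mul', PowerSeries.coeff_X_pow_mul']
    simp only [coeff_mk]
    congr 1
    · by_cases h : m ≤ k
      · rw [if_pos h]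
        have : 2 ∣ k - m ↔ 2 ∣ k := by omega
        simp [this, h]
      · simp [h]
    · by_cases h : m + m ≤ k
      · rw [if_pos h]
        have : m ∣ k - (m + m) ↔ m ∣ k := by
          constructor
          · intro hd
            have : k = (k - (m + m)) + (m + m) := by omega
            rw [this]; exact dvd_add hd ⟨2, by ring⟩
          · intro hd; exact Nat.dvd_sub hd ⟨2, by ring⟩
        simp [this, h]
      · simp [h]
  -- the two indicator functions over ℝ
  set c : ℕ → ℝ := fun k => if m ≤ k ∧ 2 ∣ k then 1 else 0 with hc
  set d : ℕ → ℝ := fun k => if m + m ≤ k ∧ m ∣ k then 1 else 0 with hd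
  have hsummand : ∀ (t : ℝ) (j : ℕ),
      (-1 : ℝ) ^ j * (b j : ℝ) * t ^ j = c j * t ^ j + d j * t ^ j := by
    intro t j
    have hbj : (b j : ℝ) = c j + d j := by
      rw [hbval j]; push_cast; simp only [hc, hd]
      split_ifs <;> norm_num
    by_cases hj : 2 ∣ j
    · have : Even j := (even_iff_two_dvd).2 hj
      rw [this.neg_one_pow, hbj]; ring
    · have hc0 : c j = 0 := by simp only [hc]; rw [if_neg]; tauto
      have hd0 : d j = 0 := by
        simp only [hd]; rw [if_neg]
        rintro ⟨-, hdv⟩; exact hj (dvd_trans hme hdv)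
      rw [hbj, hc0, hd0]; ring
  -- key computation for t ∈ (0,1)
  have key : ∀ t : ℝ, t ∈ Set.Ioo (0:ℝ) 1 →
      (1 - t) * ∑' j : ℕ, (-1) ^ j * (b j : ℝ) * t ^ j
        = t ^ m / (1 + t) + t ^ (m + m) / (∑ i ∈ Finset.range m, t ^ i) := by
    rintro t ⟨ht0, ht1⟩
    have hS1 : HasSum (fun j : ℕ => c j * t ^ j) ((1 - t ^ 2)⁻¹ * t ^ m) := by
      have hg : HasSum (fun i : ℕ => (t ^ 2) ^ i * t ^ m) ((1 - t ^ 2)⁻¹ * t ^ m) :=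
        (hasSum_geometric_of_lt_one (sq_nonneg t) (by nlinarith)).mul_right _
      have hinj : Function.Injective (fun i : ℕ => m + 2 * i) := by
        intro a b h; simp only at h; omega
      refine (Function.Injective.hasSum_iff hinj ?_).mp ?_
      · intro x hx
        by_cases h : m ≤ x ∧ 2 ∣ x
        · exact absurd ⟨(x - m) / 2, by obtain ⟨h1, h2⟩ := h; simp; omega⟩ hx
        · simp only [hc]; rw [if_neg h, zero_mul]
      · convert hg using 1
        funext i
        simp only [Function.comp, hc]
        rw [if_pos ⟨by omega, by omega⟩, pow_add, pow_mul]
        ring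
    have hS2 : HasSum (fun j : ℕ => d j * t ^ j) ((1 - t ^ m)⁻¹ * t ^ (m + m)) := by
      have hg : HasSum (fun i : ℕ => (t ^ m) ^ i * t ^ (m + m)) ((1 - t ^ m)⁻¹ * t ^ (m + m)) :=
        (hasSum_geometric_of_lt_one (by positivity)
          (pow_lt_one₀ ht0.le ht1 hm0.ne')).mul_right _
      have hinj : Function.Injective (fun i : ℕ => m + m + m * i) := by
        intro a b h
        simp only at h
        exact Nat.eq_of_mul_eq_mul_left hm0 (by omega)
      refine (Function.Injective.hasSum_iff hinj ?_).mp ?_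
      · intro x hx
        by_cases h : m + m ≤ x ∧ m ∣ x
        · obtain ⟨h1, ck, rfl⟩ := h
          have hck : 2 ≤ ck := by nlinarith
          refine absurd ⟨ck - 2, ?_⟩ hx
          simp only
          calc m + m + m * (ck - 2) = m * (2 + (ck - 2)) := by ring
            _ = m * ck := by congr 1; omega
        · simp only [hd]; rw [if_neg h, zero_mul]
      · convert hg using 1
        funext i
        simp only [Function.comp, hd]
        rw [if_pos ⟨by omega, ⟨i + 2, by ring⟩⟩, pow_add, pow_mul]
        ring
    have hsum : ∑' j : ℕ, (-1 : ℝ) ^ j * (b j : ℝ) * t ^ j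
        = (1 - t ^ 2)⁻¹ * t ^ m + (1 - t ^ m)⁻¹ * t ^ (m + m) := by
      have := (hS1.add hS2).tsum_eq
      rw [← this]
      exact tsum_congr fun j => hsummand t j
    rw [hsum]
    have h2 : (1 : ℝ) - t ^ 2 = (1 - t) * (1 + t) := by ring
    have hgs : (1 : ℝ) - t ^ m = (1 - t) * ∑ i ∈ Finset.range m, t ^ i := by
      linear_combination geom_sum_mul t m
    have hne1 : (1 : ℝ) - t ≠ 0 := by linarith
    have hne2 : (1 : ℝ) + t ≠ 0 := by linarith
    have hne3 : (∑ i ∈ Finset.range m, t ^ i) ≠ 0 := by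
      have : (0:ℝ) < ∑ i ∈ Finset.range m, t ^ i :=
        Finset.sum_pos (fun i _ => pow_pos ht0 i) ⟨0, Finset.mem_range.mpr hm0⟩
      linarith
    rw [h2, hgs]
    field_simp
  -- limit of the explicit function
  have hmR : ((m : ℝ)) = (n : ℝ) - 1 := by
    rw [hmdef, Nat.cast_sub (by omega : 1 ≤ n), Nat.cast_one]
  have hn3 : (3 : ℝ) ≤ (n : ℝ) := by exact_mod_cast hn
  have hG : Tendsto (fun t : ℝ => t ^ m / (1 + t)
        + t ^ (m + m) / (∑ i ∈ Finset.range m, t ^ i))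
      (nhds 1) (nhds (((n : ℝ) + 1) / (2 * n - 2))) := by
    have hsum1 : ∑ i ∈ Finset.range m, (1 : ℝ) ^ i = m := by simp
    have hcont : ContinuousAt (fun t : ℝ => t ^ m / (1 + t)
        + t ^ (m + m) / (∑ i ∈ Finset.range m, t ^ i)) 1 := by
      apply ContinuousAt.add
      · exact ContinuousAt.div (continuous_pow m).continuousAt
          (continuous_const.add continuous_id).continuousAt (by norm_num)
      · refine ContinuousAt.div (continuous_pow (m + m)).continuousAt
          (continuous_finset_sum _ fun i _ => continuous_pow i).continuousAt ?_
        rw [hsum1]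
        exact_mod_cast hm0.ne'
    have hval : (1 : ℝ) ^ m / (1 + 1)
        + (1 : ℝ) ^ (m + m) / (∑ i ∈ Finset.range m, (1 : ℝ) ^ i)
        = ((n : ℝ) + 1) / (2 * n - 2) := by
      rw [hsum1, one_pow, one_pow, hmR]
      have h1 : (n : ℝ) - 1 ≠ 0 := by linarith
      have h2 : 2 * (n : ℝ) - 2 ≠ 0 := by linarith
      field_simp
      ring
    have := hcont.tendsto
    rw [hval] at this
    exact this
  refine (tendsto_nhdsWithin_of_tendsto_nhds hG).congr' ?_
  filter_upwards [Ioo_mem_nhdsLT_of_mem (⟨zero_lt_one, le_refl 1⟩ : (1:ℝ) ∈ Set.Ioc 0 1)]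
    with t ht using (key t ht).symm
end

section
/- Let I : [0, 1/2] → ℕ be a step function with jump points 0 < t_1 < ... < t_l < 1/2 (all t_j irrational), constant on each open interval between consecutive jump points, with values I_1 = n-1 on [0, t_1), I_j strictly decreasing in j down to I_l = 1 on (t_{l-1}, t_l), and I_{l+1} = 2 on (t_l, 1/2]. Extend I to [0,1] by I(t) = I(1-t). Define ind(m) = Σ_{z : z^m = 1} I(arg(z)/(2π)), i.e. ind(m) = Σ_{j=0}^{m-1} I(j/m) with the convention I(j/m) = I(1 - j/m) for j/m > 1/2. Then the sequence ind(m) is monotone non-decreasing in m. -/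
open Finset

private lemma count_lt' (t : ℝ) (hirr : Irrational t) (ht0 : 0 < t) (ht2 : t < 1/2) (m : ℕ) (hm : 1 ≤ m) :
    ((Finset.range m).filter (fun k : ℕ => min ((k:ℝ)/m) (1 - (k:ℝ)/m) < t)).card
      = 2 * ⌊(m:ℝ)*t⌋₊ + 1 := by
  classical
  set f := ⌊(m:ℝ)*t⌋₊ with hf
  have hmpos : (0:ℝ) < m := by exact_mod_cast hm
  have hmt_irr : Irrational ((m:ℝ)*t) := hirr.natCast_mul (by omega)
  have hfle : (f:ℝ) ≤ (m:ℝ)*t := Nat.floor_le (by positivity)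
  have hflt : ((f:ℝ)+1) > (m:ℝ)*t := Nat.lt_floor_add_one _
  have hne : ∀ k : ℕ, (m:ℝ)*t ≠ (k:ℝ) := by
    intro k h
    exact hmt_irr ⟨(k:ℚ), by exact_mod_cast h.symm⟩
  have key : ∀ k : ℕ, ((k:ℝ) < (m:ℝ)*t ↔ k ≤ f) := by
    intro k
    constructor
    · intro h; exact Nat.le_floor h.le
    · intro h
      have h1 : (k:ℝ) ≤ (m:ℝ)*t := le_trans (by exact_mod_cast h) hfle
      exact lt_of_le_of_ne h1 (fun hh => hne k hh.symm)
  have h2f : 2*f < m := by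
    have : 2*((f:ℝ)) < (m:ℝ) := by nlinarith
    exact_mod_cast this
  have hiff : ∀ k : ℕ, k < m → (min ((k:ℝ)/m) (1 - (k:ℝ)/m) < t ↔ (k ≤ f ∨ m - f ≤ k)) := by
    intro k hk
    rw [min_lt_iff]
    have h1 : ((k:ℝ)/m < t ↔ k ≤ f) := by
      rw [div_lt_iff₀ hmpos, mul_comm t]
      exact key k
    have h2 : (1 - (k:ℝ)/m < t ↔ m - f ≤ k) := by
      rw [sub_lt_iff_lt_add, ← sub_lt_iff_lt_add']
      rw [show (1:ℝ) - t = ((m:ℝ) - (m:ℝ)*t)/m by field_simp, div_lt_div_iff_of_pos_right hmpos]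
      constructor
      · intro h
        have hmk : ((m - k : ℕ) : ℝ) < (m:ℝ)*t := by
          push_cast [Nat.cast_sub hk.le]
          linarith
        have := (key (m - k)).mp hmk
        omega
      · intro h
        have hmkf : m - k ≤ f := by omega
        have : ((m - k : ℕ) : ℝ) < (m:ℝ)*t := (key _).mpr hmkf
        rw [Nat.cast_sub hk.le] at this
        linarith
    rw [h1, h2]
  have hset : (Finset.range m).filter (fun k : ℕ => min ((k:ℝ)/m) (1 - (k:ℝ)/m) < t)
      = Finset.range (f+1) ∪ Finset.Ico (m - f) m := by
    ext k
    simp only [mem_filter, mem_range, mem_union, mem_Ico]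
    constructor
    · rintro ⟨hk, hlt⟩
      rcases (hiff k hk).mp hlt with h | h
      · exact Or.inl (by omega)
      · exact Or.inr ⟨h, hk⟩
    · rintro (h | ⟨h1, h2⟩)
      · have hk : k < m := by omega
        exact ⟨hk, (hiff k hk).mpr (Or.inl (by omega))⟩
      · exact ⟨h2, (hiff k h2).mpr (Or.inr h1)⟩
  rw [hset, Finset.card_union_of_disjoint, Finset.card_range, Nat.card_Ico]
  · omega
  · rw [Finset.disjoint_left]
    intro a ha hb
    simp only [mem_range] at ha
    simp only [mem_Ico] at hb
    omega

section
variable (l : ℕ) (t : ℕ → ℝ) (Iv : ℕ → ℕ) (I : ℝ → ℕ)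

private lemma tmono' (htmono : ∀ j, j ≤ l → t j < t (j + 1)) :
    ∀ a b, a < b → b ≤ l + 1 → t a < t b := by
  intro a b hab hb
  induction b with
  | zero => omega
  | succ b ih =>
    rcases Nat.lt_or_ge a b with h | h
    · exact lt_trans (ih h (by omega)) (htmono b (by omega))
    · have : a = b := by omega
      subst this; exact htmono a (by omega)

private lemma ivanti' (hIvdec : ∀ j, 1 ≤ j → j < l → Iv (j + 1) < Iv j) :
    ∀ a b, 1 ≤ a → a ≤ b → b ≤ l → Iv b ≤ Iv a := by
  intro a b ha hab hb
  induction b with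
  | zero => omega
  | succ b ih =>
    rcases Nat.lt_or_ge a (b+1) with h | h
    · exact le_trans (hIvdec b (by omega) (by omega)).le (ih (by omega) (by omega))
    · have : a = b + 1 := by omega
      rw [this]

private lemma tel' (hIvdec : ∀ j, 1 ≤ j → j < l → Iv (j + 1) < Iv j) :
    ∀ d a, 1 ≤ a → a + d = l → ∑ j ∈ Finset.Ico a l, (Iv j - Iv (j+1)) = Iv a - Iv l := by
  intro d
  induction d with
  | zero => intro a ha h; rw [show a = l by omega]; simp
  | succ d ih =>
    intro a ha h
    rw [Finset.sum_eq_sum_Ico_succ_bot (by omega : a < l), ih (a+1) (by omega) (by omega)]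
    have h1 : Iv (a+1) < Iv a := hIvdec a ha (by omega)
    have h2 : Iv l ≤ Iv (a+1) := ivanti' l Iv hIvdec (a+1) l (by omega) (by omega) le_rfl
    omega

private lemma pointwise' (hl1 : 1 ≤ l)
    (ht0 : t 0 = 0) (htend : t (l + 1) = 1 / 2)
    (htmono : ∀ j, j ≤ l → t j < t (j + 1))
    (hIvl : Iv l = 1) (hIvend : Iv (l + 1) = 2)
    (hIvdec : ∀ j, 1 ≤ j → j < l → Iv (j + 1) < Iv j)
    (hstep : ∀ j, 1 ≤ j → j ≤ l + 1 → ∀ x : ℝ, t (j - 1) < x → x < t j → I x = Iv j)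
    (hI0 : I 0 = Iv 1) (hIhalf : I (1 / 2) = Iv (l + 1))
    (x : ℝ) (hx0 : 0 ≤ x) (hx2 : x ≤ 1/2) (hxne : ∀ j, 1 ≤ j → j ≤ l → x ≠ t j) :
    I x = 1 + (∑ j ∈ Finset.Ico 1 l, (Iv j - Iv (j+1)) * (if x < t j then 1 else 0))
        + (if t l < x then 1 else 0) := by
  classical
  have hmono := tmono' l t htmono
  rcases eq_or_lt_of_le hx2 with heq | hlt
  · rw [heq, hIhalf, hIvend]
    have hz : ∀ j ∈ Finset.Ico 1 l, (Iv j - Iv (j+1)) * (if (1:ℝ)/2 < t j then 1 else 0) = 0 := by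
      intro j hj
      simp only [mem_Ico] at hj
      have : t j < 1/2 := htend ▸ hmono j (l+1) (by omega) le_rfl
      rw [if_neg (by linarith)]
      ring
    rw [Finset.sum_congr rfl hz]
    have : t l < 1/2 := htend ▸ hmono l (l+1) (by omega) le_rfl
    rw [if_pos this]
    simp
  · have hP : x < t (l+1) := htend ▸ hlt
    have hex : ∃ j, x < t j := ⟨l+1, hP⟩
    set j0 := Nat.find hex with hj0
    have hPj0 : x < t j0 := Nat.find_spec hex
    have hmin : ∀ i, i < j0 → ¬ x < t i := fun i hi => Nat.find_min hex hi
    have hj0le : j0 ≤ l + 1 := Nat.find_le hP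
    have hj0ge : 1 ≤ j0 := by
      rcases Nat.eq_zero_or_pos j0 with h | h
      · rw [h, ht0] at hPj0; linarith
      · exact h
    have htle : t (j0 - 1) ≤ x := not_lt.mp (hmin (j0-1) (by omega))
    have hcond : ∀ j, j0 ≤ j → j ≤ l + 1 → x < t j := by
      intro j hj hjl
      rcases Nat.eq_or_lt_of_le hj with h | h
      · rwa [← h]
      · exact lt_trans hPj0 (hmono j0 j h hjl)
    have hcond2 : ∀ j, j < j0 → ¬ x < t j := hmin
    have hsum : (∑ j ∈ Finset.Ico 1 l, (Iv j - Iv (j+1)) * (if x < t j then 1 else 0))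
        = ∑ j ∈ Finset.Ico (min j0 l) l, (Iv j - Iv (j+1)) := by
      rw [show (Finset.Ico (min j0 l) l) = (Finset.Ico 1 l).filter (fun j => j0 ≤ j) by
        ext a; simp only [mem_Ico, mem_filter]; omega]
      rw [Finset.sum_filter]
      apply Finset.sum_congr rfl
      intro j hj
      simp only [mem_Ico] at hj
      by_cases hcase : j0 ≤ j
      · rw [if_pos hcase, if_pos (hcond j hcase (by omega)), mul_one]
      · rw [if_neg hcase, if_neg (hcond2 j (by omega)), mul_zero]
    rw [hsum]
    have hIx : I x = Iv j0 := by
      rcases eq_or_lt_of_le htle with hteq | htlt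
      · have hj1 : j0 = 1 := by
          by_contra h
          exact hxne (j0-1) (by omega) (by omega) hteq.symm
        rw [hj1] at hteq
        rw [ht0] at hteq
        rw [← hteq, hj1]
        exact hI0
      · exact hstep j0 hj0ge hj0le x htlt hPj0
    rw [hIx]
    rcases Nat.lt_or_ge l j0 with hcase | hcase
    · have hj0eq : j0 = l + 1 := by omega
      have hmin' : min j0 l = l := by omega
      rw [hmin', Finset.Ico_self, Finset.sum_empty]
      have htlx : t l < x := by
        have h1 : t l ≤ x := by rw [← show j0 - 1 = l by omega]; exact htle
        exact lt_of_le_of_ne h1 (fun hh => hxne l hl1 le_rfl hh.symm)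
      rw [if_pos htlx, hj0eq, hIvend]
      omega
    · have hmin' : min j0 l = j0 := by omega
      rw [hmin', tel' l Iv hIvdec (l - j0) j0 hj0ge (by omega)]
      have hxtl : x < t l := by
        rcases Nat.eq_or_lt_of_le hcase with h | h
        · rwa [← h]
        · exact lt_trans hPj0 (hmono j0 l h (by omega))
      rw [if_neg (by linarith : ¬ t l < x), hIvl]
      have hge1 : 1 ≤ Iv j0 := hIvl ▸ ivanti' l Iv hIvdec j0 l hj0ge hcase le_rfl
      omega

private lemma form' (hl1 : 1 ≤ l)
    (ht0 : t 0 = 0) (htend : t (l + 1) = 1 / 2)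
    (htmono : ∀ j, j ≤ l → t j < t (j + 1))
    (htirr : ∀ j, 1 ≤ j → j ≤ l → Irrational (t j))
    (hIvl : Iv l = 1) (hIvend : Iv (l + 1) = 2)
    (hIvdec : ∀ j, 1 ≤ j → j < l → Iv (j + 1) < Iv j)
    (hstep : ∀ j, 1 ≤ j → j ≤ l + 1 → ∀ x : ℝ, t (j - 1) < x → x < t j → I x = Iv j)
    (hI0 : I 0 = Iv 1) (hIhalf : I (1 / 2) = Iv (l + 1))
    (m : ℕ) (hm : 1 ≤ m) :
    (∑ k ∈ Finset.range m, I (min ((k:ℝ)/m) (1 - (k:ℝ)/m)))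
      = m + (∑ j ∈ Finset.Ico 1 l, (Iv j - Iv (j+1)) * (2*⌊(m:ℝ)*(t j)⌋₊+1))
          + (m - (2*⌊(m:ℝ)*(t l)⌋₊+1)) := by
  classical
  have hmono := tmono' l t htmono
  have hmpos : (0:ℝ) < m := by exact_mod_cast hm
  set x : ℕ → ℝ := fun k => min ((k:ℝ)/m) (1 - (k:ℝ)/m) with hxdef
  have htpos : ∀ j, 1 ≤ j → j ≤ l → 0 < t j := by
    intro j h1 h2
    rw [← ht0]; exact hmono 0 j (by omega) (by omega)
  have hthalf : ∀ j, 1 ≤ j → j ≤ l → t j < 1/2 := by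
    intro j h1 h2
    rw [← htend]; exact hmono j (l+1) (by omega) le_rfl
  have hx0 : ∀ k, k < m → 0 ≤ x k := by
    intro k hk
    apply le_min (by positivity)
    have : (k:ℝ)/m ≤ 1 := by
      rw [div_le_one hmpos]; exact_mod_cast hk.le
    linarith
  have hx2 : ∀ k, x k ≤ 1/2 := by
    intro k
    rcases le_or_gt ((k:ℝ)/m) (1/2) with h | h
    · exact le_trans (min_le_left _ _) h
    · exact le_trans (min_le_right _ _) (by linarith)
  have hxne : ∀ k, ∀ j, 1 ≤ j → j ≤ l → x k ≠ t j := by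
    intro k j h1 h2 heq
    have hirr := htirr j h1 h2
    rcases min_cases ((k:ℝ)/m) (1 - (k:ℝ)/m) with ⟨h, _⟩ | ⟨h, _⟩ <;>
      rw [hxdef] at heq <;> simp only at heq <;> rw [h] at heq
    · exact hirr ⟨(k:ℚ)/(m:ℚ), by push_cast; linarith⟩
    · exact hirr ⟨1 - (k:ℚ)/(m:ℚ), by push_cast; linarith⟩
  have hsum : (∑ k ∈ Finset.range m, I (x k))
      = ∑ k ∈ Finset.range m, (1 + (∑ j ∈ Finset.Ico 1 l, (Iv j - Iv (j+1)) * (if x k < t j then 1 else 0))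
        + (if t l < x k then 1 else 0)) := by
    apply Finset.sum_congr rfl
    intro k hk
    rw [mem_range] at hk
    exact pointwise' l t Iv I hl1 ht0 htend htmono hIvl hIvend hIvdec hstep hI0 hIhalf
      (x k) (hx0 k hk) (hx2 k) (hxne k)
  rw [hsum]
  rw [Finset.sum_add_distrib, Finset.sum_add_distrib, Finset.sum_const, card_range, smul_eq_mul, mul_one]
  congr 1
  · congr 1
    rw [Finset.sum_comm]
    apply Finset.sum_congr rfl
    intro j hj
    rw [mem_Ico] at hj
    rw [← Finset.mul_sum, Finset.sum_boole]
    rw [count_lt' (t j) (htirr j hj.1 (by omega)) (htpos j hj.1 (by omega)) (hthalf j hj.1 (by omega)) m hm]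
    norm_num
  · rw [Finset.sum_boole]
    have hcompl : (Finset.range m).filter (fun k : ℕ => t l < x k)
        = Finset.range m \ (Finset.range m).filter (fun k : ℕ => x k < t l) := by
      ext k
      simp only [mem_filter, mem_sdiff, mem_range]
      constructor
      · rintro ⟨hk, hlt⟩
        exact ⟨hk, fun hh => absurd hh.2 (by linarith)⟩
      · rintro ⟨hk, hh⟩
        refine ⟨hk, ?_⟩
        rcases lt_trichotomy (x k) (t l) with h | h | h
        · exact absurd ⟨hk, h⟩ hh
        · exact absurd h (hxne k l hl1 le_rfl)
        · exact h
    rw [hcompl, Finset.card_sdiff_of_subset (Finset.filter_subset _ _), card_range]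
    rw [count_lt' (t l) (htirr l hl1 le_rfl) (htpos l hl1 le_rfl) (hthalf l hl1 le_rfl) m hm]
    norm_num

end

/-- For a step function `I` on `[0,1/2]` with irrational jump points
`0 < t_1 < … < t_l < 1/2`, values `I_1 = n-1 > I_2 > … > I_l = 1` on the
successive intervals and `I_{l+1} = 2` on `(t_l, 1/2]`, extended symmetrically
to `[0,1]`, the sequence `ind(m) = ∑_{j=0}^{m-1} Ĩ(j/m)` with
`Ĩ(u) = I(min(u, 1-u))` is monotone non-decreasing in `m ≥ 1`. -/
theorem stmt_6 (n l : ℕ) (hn : 2 ≤ n) (hl1 : 1 ≤ l) (hln : l ≤ n - 1)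
    (t : ℕ → ℝ) (Iv : ℕ → ℕ) (I : ℝ → ℕ)
    (ht0 : t 0 = 0) (htend : t (l + 1) = 1 / 2)
    (htmono : ∀ j, j ≤ l → t j < t (j + 1))
    (htirr : ∀ j, 1 ≤ j → j ≤ l → Irrational (t j))
    (hIv1 : Iv 1 = n - 1) (hIvl : Iv l = 1) (hIvend : Iv (l + 1) = 2)
    (hIvdec : ∀ j, 1 ≤ j → j < l → Iv (j + 1) < Iv j)
    (hstep : ∀ j, 1 ≤ j → j ≤ l + 1 → ∀ x : ℝ, t (j - 1) < x → x < t j → I x = Iv j)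
    (hI0 : I 0 = Iv 1) (hIhalf : I (1 / 2) = Iv (l + 1)) :
    ∀ m : ℕ, 1 ≤ m →
      (∑ j ∈ Finset.range m, I (min ((j : ℝ) / m) (1 - (j : ℝ) / m))) ≤
        ∑ j ∈ Finset.range (m + 1), I (min ((j : ℝ) / (m + 1)) (1 - (j : ℝ) / (m + 1))) := by
  intro m hm
  have hmono := tmono' l t htmono
  have h1 := form' l t Iv I hl1 ht0 htend htmono htirr hIvl hIvend hIvdec hstep hI0 hIhalf m hm
  have h2 := form' l t Iv I hl1 ht0 htend htmono htirr hIvl hIvend hIvdec hstep hI0 hIhalf (m+1) (by omega)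
  have hcast : ((m+1 : ℕ) : ℝ) = (m : ℝ) + 1 := by push_cast; ring
  rw [hcast] at h2
  rw [h1, h2]
  have htpos : ∀ j, 1 ≤ j → j ≤ l → 0 < t j := by
    intro j ha hb
    rw [← ht0]; exact hmono 0 j (by omega) (by omega)
  have hthalf : ∀ j, 1 ≤ j → j ≤ l → t j < 1/2 := by
    intro j ha hb
    rw [← htend]; exact hmono j (l+1) (by omega) le_rfl
  have hfloor_le : ∀ j, 1 ≤ j → j ≤ l → ⌊(m:ℝ)*(t j)⌋₊ ≤ ⌊((m:ℝ)+1)*(t j)⌋₊ := by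
    intro j ha hb
    apply Nat.floor_le_floor
    have := (htpos j ha hb).le
    nlinarith
  have htl_nn : (0:ℝ) ≤ (m:ℝ)*(t l) :=
    mul_nonneg (by positivity) (htpos l hl1 le_rfl).le
  have hfloor_succ : ⌊((m:ℝ)+1)*(t l)⌋₊ ≤ ⌊(m:ℝ)*(t l)⌋₊ + 1 := by
    have h' : ((m:ℝ)+1)*(t l) ≤ (m:ℝ)*(t l) + 1 := by
      have := hthalf l hl1 le_rfl
      nlinarith
    calc ⌊((m:ℝ)+1)*(t l)⌋₊ ≤ ⌊(m:ℝ)*(t l) + 1⌋₊ := Nat.floor_le_floor h'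
    _ = ⌊(m:ℝ)*(t l)⌋₊ + 1 := by
        rw [Nat.floor_add_one htl_nn]
  have hAl : 2*⌊(m:ℝ)*(t l)⌋₊ + 1 ≤ m := by
    have h1' : (2*(⌊(m:ℝ)*(t l)⌋₊:ℝ)) < (m:ℝ) := by
      have hle : (⌊(m:ℝ)*(t l)⌋₊:ℝ) ≤ (m:ℝ)*(t l) := Nat.floor_le htl_nn
      have := hthalf l hl1 le_rfl
      have hmpos : (0:ℝ) < m := by exact_mod_cast hm
      nlinarith
    have : 2*⌊(m:ℝ)*(t l)⌋₊ < m := by exact_mod_cast h1'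
    omega
  have hsum_le : (∑ j ∈ Finset.Ico 1 l, (Iv j - Iv (j+1)) * (2*⌊(m:ℝ)*(t j)⌋₊+1))
      ≤ ∑ j ∈ Finset.Ico 1 l, (Iv j - Iv (j+1)) * (2*⌊((m:ℝ)+1)*(t j)⌋₊+1) := by
    apply Finset.sum_le_sum
    intro j hj
    rw [Finset.mem_Ico] at hj
    have := hfloor_le j hj.1 (by omega)
    exact Nat.mul_le_mul_left _ (by omega)
  generalize hSA : (∑ j ∈ Finset.Ico 1 l, (Iv j - Iv (j+1)) * (2*⌊(m:ℝ)*(t j)⌋₊+1)) = SA at hsum_le ⊢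
  generalize hSB : (∑ j ∈ Finset.Ico 1 l, (Iv j - Iv (j+1)) * (2*⌊((m:ℝ)+1)*(t j)⌋₊+1)) = SB at hsum_le ⊢
  generalize hA : ⌊(m:ℝ)*(t l)⌋₊ = A at hfloor_succ hAl ⊢
  generalize hB : ⌊((m:ℝ)+1)*(t l)⌋₊ = B at hfloor_succ ⊢
  omega
end

section
/- With the notation of the step function setting: for every integer m ≥ 1, ind(m+1) - ind(m) = A_m + B_m, where A_m = 2 if m is odd, A_m = 2·Ĩ(m/(2m+2)) - 2 if m is even, and B_m = 2·Σ_{1 ≤ j < m/2} ( Ĩ(j/(m+1)) - Ĩ(j/m) ). -/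
open Finset

lemma sum_refl (It : ℝ → ℕ) (hsym : ∀ t ∈ Set.Icc (0 : ℝ) 1, It t = It (1 - t))
    (n : ℕ) (hn : 1 ≤ n) :
    ∑ j ∈ Ico ((n+1)/2) n, (It ((j : ℝ) / n) : ℤ)
      = ∑ j ∈ Ico 1 (n/2 + 1), (It ((j : ℝ) / n) : ℤ) := by
  apply Finset.sum_nbij' (fun j => n - j) (fun j => n - j)
  · intro a ha; simp only [Finset.mem_Ico] at *; omega
  · intro a ha; simp only [Finset.mem_Ico] at *; omega
  · intro a ha; simp only [Finset.mem_Ico] at ha; omega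
  · intro a ha; simp only [Finset.mem_Ico] at ha; omega
  · intro a ha; simp only [Finset.mem_Ico] at ha
    have hle : a ≤ n := by omega
    have hcast : ((n - a : ℕ) : ℝ) = (n : ℝ) - a := by
      push_cast [hle]; ring
    have hnpos : (0:ℝ) < n := by exact_mod_cast hn
    have h1 : ((n - a : ℕ) : ℝ) / n = 1 - (a : ℝ) / n := by
      rw [hcast]; field_simp
    have hmem : (a : ℝ) / n ∈ Set.Icc (0:ℝ) 1 := by
      constructor
      · positivity
      · rw [div_le_one hnpos]; exact_mod_cast hle
    rw [h1, ← hsym _ hmem]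

lemma sum_split (It : ℝ → ℕ) (hsym : ∀ t ∈ Set.Icc (0 : ℝ) 1, It t = It (1 - t))
    (hhalf : It (1 / 2) = 2) (n : ℕ) (hn : 1 ≤ n) :
    ∑ j ∈ range n, (It ((j : ℝ) / n) : ℤ)
      = (It 0 : ℤ) + (if n % 2 = 0 then 2 else 0)
        + 2 * ∑ j ∈ Ico 1 ((n+1)/2), (It ((j : ℝ) / n) : ℤ) := by
  have h0 : (1:ℕ) ≤ (n+1)/2 := by omega
  have h1 : (n+1)/2 ≤ n := by omega
  rw [Finset.range_eq_Ico, ← Finset.sum_Ico_consecutive (fun j : ℕ => (It ((j : ℝ) / n) : ℤ)) (Nat.zero_le 1) hn,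
    ← Finset.sum_Ico_consecutive (fun j : ℕ => (It ((j : ℝ) / n) : ℤ)) h0 h1, sum_refl It hsym n hn]
  have hfirst : ∑ j ∈ Ico (0:ℕ) 1, (It ((j : ℝ) / n) : ℤ) = (It 0 : ℤ) := by
    simp
  rw [hfirst]
  rcases Nat.even_or_odd n with he | ho
  · obtain ⟨k, hk⟩ := he
    have hmod : n % 2 = 0 := by omega
    have hA : n/2 + 1 = (n+1)/2 + 1 := by omega
    have hB : (n+1)/2 = n/2 := by omega
    rw [hmod, hA, Finset.sum_Ico_succ_top (by omega)]
    have hmid : ((((n+1)/2 : ℕ)) : ℝ) / n = 1/2 := by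
      have : ((n:ℝ)) = 2 * (((n+1)/2 : ℕ) : ℝ) := by
        have : (n+1)/2 = k := by omega
        rw [this]; push_cast; rw [hk]; push_cast; ring
      rw [this]
      have hkpos : (0:ℝ) < (((n+1)/2 : ℕ) : ℝ) := by
        have : 1 ≤ (n+1)/2 := h0
        exact_mod_cast this
      field_simp
    rw [hmid, hhalf]
    push_cast
    ring
  · obtain ⟨k, hk⟩ := ho
    have hmod : n % 2 = 1 := by omega
    have hA : n/2 + 1 = (n+1)/2 := by omega
    rw [hmod, hA]
    push_cast
    ring

/-- Decomposition `ind(m+1) - ind(m) = A_m + B_m` for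
`ind(m) = ∑_{j=0}^{m-1} Ĩ(j/m)`, where `Ĩ(t) = Ĩ(1-t)`, `Ĩ(1/2) = 2`,
`A_m = 2` for odd `m`, `A_m = 2·Ĩ(m/(2m+2)) - 2` for even `m`, and
`B_m = 2·∑_{1 ≤ j < m/2} (Ĩ(j/(m+1)) - Ĩ(j/m))`.  (Here `It` plays the
role of `Ĩ`.) -/
theorem stmt_7 (It : ℝ → ℕ) (hsym : ∀ t ∈ Set.Icc (0 : ℝ) 1, It t = It (1 - t))
    (hhalf : It (1 / 2) = 2) :
    ∀ m : ℕ, 1 ≤ m →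
      ((∑ j ∈ Finset.range (m + 1), (It ((j : ℝ) / (m + 1)) : ℤ)) -
          ∑ j ∈ Finset.range m, (It ((j : ℝ) / m) : ℤ)) =
        (if m % 2 = 1 then 2 else 2 * (It ((m : ℝ) / (2 * m + 2)) : ℤ) - 2) +
          2 * ∑ j ∈ Finset.Ico 1 ((m + 1) / 2),
            ((It ((j : ℝ) / (m + 1)) : ℤ) - (It ((j : ℝ) / m) : ℤ)) := by
  intro m hm
  have hS1 := sum_split It hsym hhalf (m + 1) (by omega)
  have hS0 := sum_split It hsym hhalf m hm
  have hcast : ∀ j : ℕ, ((j : ℝ) / ((m + 1 : ℕ) : ℝ)) = (j : ℝ) / ((m : ℝ) + 1) := by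
    intro j; push_cast; ring
  simp only [hcast] at hS1
  rw [hS1, hS0, Finset.sum_sub_distrib]
  rcases Nat.even_or_odd m with he | ho
  · obtain ⟨k, hk⟩ := he
    have hm2 : m % 2 = 0 := by omega
    have hn2 : (m + 1) % 2 = 1 := by omega
    have hA : (m + 1 + 1) / 2 = (m + 1) / 2 + 1 := by omega
    rw [hm2, hn2, hA, Finset.sum_Ico_succ_top (by omega)]
    have hmid : (((m + 1) / 2 : ℕ) : ℝ) / ((m : ℝ) + 1) = (m : ℝ) / (2 * m + 2) := by
      have h1 : ((m + 1) / 2 : ℕ) = k := by omega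
      have h2 : (m : ℝ) = 2 * k := by rw [hk]; push_cast; ring
      rw [h1, h2]
      have : (2 * (k:ℝ) + 1) ≠ 0 := by positivity
      field_simp
    rw [hmid]
    simp only [hm2]
    norm_num
    ring
  · obtain ⟨k, hk⟩ := ho
    have hm2 : m % 2 = 1 := by omega
    have hn2 : (m + 1) % 2 = 0 := by omega
    have hA : (m + 1 + 1) / 2 = (m + 1) / 2 := by omega
    rw [hm2, hn2, hA]
    simp only []
    norm_num
    ring
end

section
/- Let I_1, ..., I_{l+1} be integers with I_1 = n-1 and Σ_{j=1}^{l} |I_j - I_{j+1}| ≤ n-1, where each |I_j - I_{j+1}| ≥ 1. If min{I_1,...,I_l} = 1 is attained first at index r ≤ l and I_{l+1} is even and positive, then r = l, I_{l+1} = 2, and the sequence satisfies n-1 = I_1 > I_2 > ... > I_l = 1. -/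
lemma tel_aux (I : ℕ → ℤ) (a b : ℕ) (hab : a ≤ b) :
    ∑ j ∈ Finset.Ico a b, (I j - I (j + 1)) = I a - I b := by
  induction b, hab using Nat.le_induction with
  | base => simp
  | succ b hb ih => rw [Finset.sum_Ico_succ_top hb, ih]; ring

theorem stmt_11 (n l r : ℕ) (hn : 2 ≤ n) (hl1 : 1 ≤ l) (hln : l ≤ n - 1)
    (I : ℕ → ℤ) (hpos : ∀ j, 1 ≤ j → j ≤ l + 1 → 0 ≤ I j)
    (hI1 : I 1 = (n : ℤ) - 1)
    (hjump : ∀ j, 1 ≤ j → j ≤ l → 1 ≤ |I j - I (j + 1)|)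
    (hvar : ∑ j ∈ Finset.Icc 1 l, |I j - I (j + 1)| ≤ (n : ℤ) - 1)
    (hmin : ∀ j, 1 ≤ j → j ≤ l → 1 ≤ I j)
    (hr1 : 1 ≤ r) (hrl : r ≤ l) (hIr : I r = 1)
    (hrfirst : ∀ j, 1 ≤ j → j < r → I j ≠ 1)
    (heven : Even (I (l + 1))) (hIend : 0 < I (l + 1)) :
    r = l ∧ I (l + 1) = 2 ∧ (∀ j, 1 ≤ j → j < l → I (j + 1) < I j) ∧ I l = 1 := by
  have hn2 : (2 : ℤ) ≤ (n : ℤ) := by exact_mod_cast hn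
  have hsplit : ∑ j ∈ Finset.Ico 1 r, |I j - I (j + 1)| +
      ∑ j ∈ Finset.Ico r (l + 1), |I j - I (j + 1)| =
      ∑ j ∈ Finset.Icc 1 l, |I j - I (j + 1)| := by
    rw [show Finset.Icc 1 l = Finset.Ico 1 (l + 1) from by rw [Finset.Ico_add_one_right_eq_Icc]]
    exact Finset.sum_Ico_consecutive _ hr1 (by omega)
  have hA : (n : ℤ) - 2 ≤ ∑ j ∈ Finset.Ico 1 r, |I j - I (j + 1)| := by
    have h1 := Finset.abs_sum_le_sum_abs (fun j => I j - I (j + 1)) (Finset.Ico 1 r)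
    rw [tel_aux I 1 r hr1] at h1
    have : |I 1 - I r| = (n : ℤ) - 2 := by
      rw [hI1, hIr, abs_of_nonneg (by linarith)]; ring
    linarith
  have hB : ((l : ℤ) + 1 - r) ≤ ∑ j ∈ Finset.Ico r (l + 1), |I j - I (j + 1)| := by
    have h1 : ∀ j ∈ Finset.Ico r (l + 1), (1 : ℤ) ≤ |I j - I (j + 1)| := by
      intro j hj
      simp only [Finset.mem_Ico] at hj
      exact hjump j (by omega) (by omega)
    calc ((l : ℤ) + 1 - r) = (Finset.Ico r (l + 1)).card • (1 : ℤ) := by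
          rw [Nat.card_Ico, nsmul_eq_mul, mul_one]
          push_cast [Nat.cast_sub (show r ≤ l + 1 by omega)]; ring
      _ ≤ _ := Finset.card_nsmul_le_sum _ _ _ h1
  have hrel : r = l := by
    have : ((l : ℤ) + 1 - r) ≤ 1 := by linarith
    omega
  subst hrel
  have hBsingle : ∑ j ∈ Finset.Ico r (r + 1), |I j - I (j + 1)| = |I r - I (r + 1)| := by
    rw [Nat.Ico_succ_singleton, Finset.sum_singleton]
  have hend2 : 2 ≤ I (r + 1) := by
    rcases heven with ⟨k, hk⟩; omega
  have hBval : ∑ j ∈ Finset.Ico r (r + 1), |I j - I (j + 1)| = I (r + 1) - 1 := by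
    rw [hBsingle, hIr, abs_sub_comm, abs_of_nonneg (by linarith)]
  have hI2 : I (r + 1) = 2 := by
    have : I (r + 1) - 1 ≤ 1 := by
      rw [← hBval]; linarith
    linarith
  refine ⟨rfl, hI2, ?_, hIr⟩
  have hAle : ∑ j ∈ Finset.Ico 1 r, |I j - I (j + 1)| ≤ (n : ℤ) - 2 := by
    rw [hBval, hI2] at hsplit; linarith
  have htel : ∑ j ∈ Finset.Ico 1 r, (I j - I (j + 1)) = (n : ℤ) - 2 := by
    rw [tel_aux I 1 r hr1, hI1, hIr]; ring
  have hterm : ∀ j ∈ Finset.Ico 1 r, I j - I (j + 1) = |I j - I (j + 1)| := by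
    by_contra hcon
    push_neg at hcon
    obtain ⟨i, hi, hne⟩ := hcon
    have hlt : I i - I (i + 1) < |I i - I (i + 1)| :=
      lt_of_le_of_ne (le_abs_self _) hne
    have : ∑ j ∈ Finset.Ico 1 r, (I j - I (j + 1)) <
        ∑ j ∈ Finset.Ico 1 r, |I j - I (j + 1)| :=
      Finset.sum_lt_sum (fun j _ => le_abs_self _) ⟨i, hi, hlt⟩
    linarith
  intro j hj1 hjr
  have hmem : j ∈ Finset.Ico 1 r := by simp; omega
  have h1 := hterm j hmem
  have h2 := hjump j hj1 (by omega)
  rw [← h1] at h2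
  linarith
end
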